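/- Let f : ℝ^d → ℝ be convex with L-Lipschitz gradient and minimizer x*. Fix γ ∈ [0,1), set α = 1/L, c_t = 1 + γ/(4(1-γ)) + t/4, β_t = (c_t - γ c_{t+1})/(1 + (1-γ) c_{t+1}), q_t = 1 + (1-γ)c_{t+1}, a_{t+1} = c_t q_t²/(c_t - γ c_{t+1}) for t ≥ 0, and a_0 = a_1. Run EMA-Nesterov with gradient-descent base step and define Φ_t = (a_t/L)(f(x^t) - f(x*)) + (1/2)‖x^t + c_t m^t - x*‖². Then for every t ≥ 0, Φ_{t+1} ≤ Φ_t. -/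

import Mathlib

open InnerProductSpace in
lemma fderiv_eq_inner_gradient {E : Type*} [NormedAddCommGroup E] [InnerProductSpace ℝ E]
    [CompleteSpace E] (f : E → ℝ) (z v : E) :
    fderiv ℝ f z v = inner ℝ (gradient f z) v := by
  rw [gradient, ← toDual_symm_apply]

lemma line_hasDerivAt {E : Type*} [NormedAddCommGroup E] [InnerProductSpace ℝ E]
    [CompleteSpace E] (f : E → ℝ) (hdiff : Differentiable ℝ f) (z v : E) (s : ℝ) :
    HasDerivAt (fun s : ℝ => f (z + s • v)) (fderiv ℝ f (z + s • v) v) s := by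
  have h1 : HasDerivAt (fun s : ℝ => z + s • v) v s := by
    simpa using ((hasDerivAt_id s).smul_const v).const_add z
  exact ((hdiff (z + s • v)).hasFDerivAt.comp_hasDerivAt s h1)

lemma convex_grad_ineq {E : Type*} [NormedAddCommGroup E] [InnerProductSpace ℝ E]
    [CompleteSpace E] (f : E → ℝ) (hdiff : Differentiable ℝ f)
    (hconv : ConvexOn ℝ Set.univ f) (z w : E) :
    f z + inner ℝ (gradient f z) (w - z) ≤ f w := by
  set φ : ℝ → ℝ := fun s => f (z + s • (w - z)) with hφ
  have hφconv : ConvexOn ℝ Set.univ φ := by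
    have := hconv.comp_affineMap (AffineMap.lineMap z w)
    simp only [Set.preimage_univ] at this
    have e : φ = f ∘ AffineMap.lineMap z w := by
      funext s
      simp [φ, AffineMap.lineMap_apply, add_comm]
    rw [e]; exact this
  have hd0 : HasDerivAt φ (fderiv ℝ f z (w - z)) 0 := by
    simpa using line_hasDerivAt f hdiff z (w - z) 0
  have h := hφconv.deriv_le_slope (Set.mem_univ 0) (Set.mem_univ 1) one_pos
    hd0.differentiableAt
  rw [hd0.deriv] at h
  rw [slope_def_field] at h
  have hφ1 : φ 1 = f w := by simp [φ]
  have hφ0 : φ 0 = f z := by simp [φ]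
  rw [fderiv_eq_inner_gradient] at h
  rw [hφ1, hφ0] at h
  simp at h
  have hfg := fderiv_eq_inner_gradient f z (w - z)
  rw [map_sub] at hfg
  linarith

lemma descent_lemma {E : Type*} [NormedAddCommGroup E] [InnerProductSpace ℝ E]
    [CompleteSpace E] (f : E → ℝ) (hdiff : Differentiable ℝ f) (L : ℝ) (hL : 0 < L)
    (hlip : ∀ z w, ‖gradient f z - gradient f w‖ ≤ L * ‖z - w‖) (z w : E) :
    f w ≤ f z + inner ℝ (gradient f z) (w - z) + L / 2 * ‖w - z‖ ^ 2 := by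
  set v := w - z with hv
  set ψ : ℝ → ℝ := fun s => f (z + s • v) - s * (fderiv ℝ f z v) - L * s ^ 2 / 2 * ‖v‖ ^ 2
    with hψ
  have hψd : ∀ s : ℝ, HasDerivAt ψ
      (fderiv ℝ f (z + s • v) v - fderiv ℝ f z v - L * s * ‖v‖ ^ 2) s := by
    intro s
    have h1 := line_hasDerivAt f hdiff z v s
    have h2 : HasDerivAt (fun s : ℝ => s * (fderiv ℝ f z v)) (fderiv ℝ f z v) s := by
      simpa using (hasDerivAt_id s).mul_const (fderiv ℝ f z v)
    have h3 : HasDerivAt (fun s : ℝ => L * s ^ 2 / 2 * ‖v‖ ^ 2) (L * s * ‖v‖ ^ 2) s := by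
      have : HasDerivAt (fun s : ℝ => s ^ 2) (2 * s) s := by
        simpa using hasDerivAt_pow 2 s
      have := ((this.const_mul L).div_const 2).mul_const (‖v‖ ^ 2)
      have e : L * s * ‖v‖ ^ 2 = L * (2 * s) / 2 * ‖v‖ ^ 2 := by ring
      rw [e]; exact this
    exact (h1.sub h2).sub h3
  have hanti : ∀ s ∈ Set.Icc (0:ℝ) 1, ∀ u ∈ Set.Icc (0:ℝ) 1, s ≤ u → ψ u ≤ ψ s := by
    have := antitoneOn_of_deriv_nonpos (convex_Icc (0:ℝ) 1)
      (fun s _ => (hψd s).continuousAt.continuousWithinAt)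
      (fun s _ => (hψd s).differentiableAt.differentiableWithinAt)
      (fun s hs => by
        rw [(hψd s).deriv]
        rw [interior_Icc] at hs
        have hs0 : 0 ≤ s := le_of_lt hs.1
        have key : fderiv ℝ f (z + s • v) v - fderiv ℝ f z v ≤ L * s * ‖v‖ ^ 2 := by
          rw [fderiv_eq_inner_gradient, fderiv_eq_inner_gradient]
          have h1 : (inner ℝ (gradient f (z + s • v)) v : ℝ) - inner ℝ (gradient f z) v =
              inner ℝ (gradient f (z + s • v) - gradient f z) v := by
            rw [inner_sub_left]
          rw [h1]
          calc (inner ℝ (gradient f (z + s • v) - gradient f z) v : ℝ)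
              ≤ ‖gradient f (z + s • v) - gradient f z‖ * ‖v‖ := real_inner_le_norm _ _
            _ ≤ (L * ‖(z + s • v) - z‖) * ‖v‖ := by
                have := hlip (z + s • v) z
                nlinarith [norm_nonneg v]
            _ = L * s * ‖v‖ ^ 2 := by
                simp [norm_smul, abs_of_nonneg hs0]
                ring
        linarith)
    intro s hs u hu hsu
    exact this hs hu hsu
  have h01 := hanti 0 (by norm_num) 1 (by norm_num) (by norm_num)
  have hψ1 : ψ 1 = f w - fderiv ℝ f z v - L / 2 * ‖v‖ ^ 2 := by
    simp [ψ, hv]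
  have hψ0 : ψ 0 = f z := by simp [ψ]
  rw [hψ1, hψ0] at h01
  rw [← fderiv_eq_inner_gradient]
  linarith

lemma keyD (u T : ℝ) (hu : 0 < u) (hu1 : u ≤ 1) (hT : 0 ≤ T) :
    (1+3*u+u*(T+1))*(5+4*u+u*(T+1))^2/(16*u^2*(5+T))
      - (1+3*u+u*T)*(5+4*u+u*T)^2/(16*u^2*(4+T)) ≤ (5+4*u+u*(T+1))/4 := by
  have h1 : (0:ℝ) < 16*u^2*(5+T) := by positivity
  have h2 : (0:ℝ) < 16*u^2*(4+T) := by positivity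
  rw [div_sub_div _ _ (ne_of_gt h1) (ne_of_gt h2), div_le_div_iff₀ (by positivity) (by norm_num)]
  have hP : (0:ℝ) ≤ 64*u^2*(25 - 25*u + 108*u^2 + 63*u^2*(T+1) + 9*u^2*(T+1)^2
      + 120*u^3 + 94*u^3*(T+1) + 24*u^3*(T+1)^2 + 2*u^3*(T+1)^3) := by
    have h3 : (0:ℝ) ≤ 25 - 25*u := by linarith
    positivity
  nlinarith [hP]

set_option maxHeartbeats 4000000 in
/-- monotonicity `Φ_{t+1} ≤ Φ_t` of the Lyapunov function for EMA-Nesterov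
with gradient-descent base step on a convex `L`-smooth objective. -/
theorem ema_nesterov_lyapunov_decrease_convex
    (d : ℕ) (f : EuclideanSpace ℝ (Fin d) → ℝ)
    (L : ℝ) (hL : 0 < L)
    (hdiff : Differentiable ℝ f)
    (hconv : ConvexOn ℝ Set.univ f)
    (hlip : ∀ z w, ‖gradient f z - gradient f w‖ ≤ L * ‖z - w‖)
    (xstar : EuclideanSpace ℝ (Fin d)) (hmin : ∀ z, f xstar ≤ f z)
    (γ : ℝ) (hγ0 : 0 ≤ γ) (hγ1 : γ < 1)
    (α : ℝ) (hα : α = 1 / L)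
    (c β q a : ℕ → ℝ)
    (hc : ∀ t : ℕ, c t = 1 + γ / (4 * (1 - γ)) + (t : ℝ) / 4)
    (hβ : ∀ t : ℕ, β t = (c t - γ * c (t + 1)) / (1 + (1 - γ) * c (t + 1)))
    (hq : ∀ t : ℕ, q t = 1 + (1 - γ) * c (t + 1))
    (ha : ∀ t : ℕ, a (t + 1) = c t * q t ^ 2 / (c t - γ * c (t + 1)))
    (ha0 : a 0 = a 1)
    (x m : ℕ → EuclideanSpace ℝ (Fin d))
    (hm0 : m 0 = 0)
    (hx : ∀ t, x (t + 1) = (x t + β t • m t) - α • gradient f (x t + β t • m t))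
    (hm : ∀ t, m (t + 1) = γ • m t + (1 - γ) • (x (t + 1) - x t)) :
    ∀ t : ℕ,
      a (t + 1) / L * (f (x (t + 1)) - f xstar)
          + 1 / 2 * ‖x (t + 1) + c (t + 1) • m (t + 1) - xstar‖ ^ 2 ≤
        a t / L * (f (x t) - f xstar) + 1 / 2 * ‖x t + c t • m t - xstar‖ ^ 2 := by
  have hu : (0:ℝ) < 1 - γ := by linarith
  -- closed forms
  have hcval : ∀ n : ℕ, c n = (1 + 3*(1-γ) + (1-γ)*(n:ℝ)) / (4*(1-γ)) := by
    intro n; rw [hc n]; field_simp; ring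
  have hsval : ∀ n : ℕ, c n - γ * c (n+1) = (1-γ) * (4 + (n:ℝ)) / 4 := by
    intro n; rw [hc n, hc (n+1)]; push_cast; field_simp; ring
  have hspos : ∀ n : ℕ, 0 < c n - γ * c (n+1) := by
    intro n; rw [hsval n]; positivity
  have hcpos : ∀ n : ℕ, 0 < c n := by
    intro n; rw [hcval n]; positivity
  have hqval : ∀ n : ℕ, q n = (5 + 4*(1-γ) + (1-γ)*(n:ℝ)) / 4 := by
    intro n; rw [hq n, hc (n+1)]; push_cast; field_simp; ring
  have hq1 : ∀ n : ℕ, 1 ≤ q n := by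
    intro n; rw [hq n]
    nlinarith [hcpos (n+1), hu]
  have hqpos : ∀ n : ℕ, 0 < q n := fun n => lt_of_lt_of_le one_pos (hq1 n)
  have hβeq : ∀ n : ℕ, β n * q n = c n - γ * c (n+1) := by
    intro n; rw [hβ n, ← hq n, div_mul_cancel₀ _ (hqpos n).ne']
  have hβpos : ∀ n : ℕ, 0 < β n := by
    intro n
    have := hβeq n
    nlinarith [hspos n, hqpos n]
  have haeq : ∀ n : ℕ, a (n+1) * β n = c n * q n := by
    intro n
    rw [ha n, hβ n, ← hq n]
    field_simp [(hspos n).ne', (hqpos n).ne']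
  have hapos : ∀ n : ℕ, 0 < a (n+1) := by
    intro n
    rw [ha n]
    exact div_pos (mul_pos (hcpos n) (pow_pos (hqpos n) 2)) (hspos n)
  have haq2 : ∀ n : ℕ, q n ^ 2 ≤ a (n+1) := by
    intro n
    rw [ha n, le_div_iff₀ (hspos n)]
    have hγc : 0 ≤ γ * c (n+1) := mul_nonneg hγ0 (hcpos (n+1)).le
    nlinarith [sq_nonneg (q n), hqpos n]
  have haval : ∀ n : ℕ, a (n+1) =
      (1+3*(1-γ)+(1-γ)*(n:ℝ))*(5+4*(1-γ)+(1-γ)*(n:ℝ))^2/(16*(1-γ)^2*(4+(n:ℝ))) := by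
    intro n
    have h4n : (0:ℝ) < 4 + (n:ℝ) := by positivity
    rw [ha n, hsval n, hcval n, hqval n]
    field_simp
    ring
  -- key decrease of `a` differences
  have hD : ∀ n : ℕ, a (n+1) - q n ≤ a n := by
    intro n
    cases n with
    | zero =>
      rw [← ha0]
      have := hqpos 0
      linarith
    | succ k =>
      have h := keyD (1-γ) (k:ℝ) hu (by linarith) (Nat.cast_nonneg k)
      rw [haval k, haval (k+1), hqval (k+1)]
      push_cast
      have e : (4:ℝ) + ((k:ℝ)+1) = 5 + (k:ℝ) := by ring
      rw [e]
      linarith [h]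
  intro t
  -- abbreviation-free: g := gradient f (x t + β t • m t)
  have hcq : c t = (1 + (1-γ) * c (t+1)) * β t + γ * c (t+1) := by
    have h1 := hβeq t
    rw [hq t] at h1
    linear_combination -h1
  have hzid : x (t+1) + c (t+1) • m (t+1) - xstar
      = (x t + c t • m t - xstar) - (α * q t) • gradient f (x t + β t • m t) := by
    rw [hm t, hx t, hq t]
    rw [hcq]
    module
  have hnorm : ‖(x t + c t • m t - xstar) - (α * q t) • gradient f (x t + β t • m t)‖^2
      = ‖x t + c t • m t - xstar‖^2
        - 2*(α*q t)*(inner ℝ (gradient f (x t + β t • m t)) (x t + c t • m t - xstar))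
        + (α*q t)^2*‖gradient f (x t + β t • m t)‖^2 := by
    rw [norm_sub_sq_real, real_inner_smul_right, norm_smul, real_inner_comm]
    rw [Real.norm_eq_abs, mul_pow, sq_abs]
    ring
  have hsplit : (inner ℝ (gradient f (x t + β t • m t)) (x t + c t • m t - xstar) : ℝ)
      = inner ℝ (gradient f (x t + β t • m t)) ((x t + β t • m t) - xstar)
        + (c t - β t) * inner ℝ (gradient f (x t + β t • m t)) (m t) := by
    have e : x t + c t • m t - xstar = ((x t + β t • m t) - xstar) + (c t - β t) • m t := by
      module
    rw [e, inner_add_right, real_inner_smul_right]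
  have h1 : f (x (t+1)) ≤ f (x t + β t • m t)
      - 1/(2*L) * ‖gradient f (x t + β t • m t)‖^2 := by
    have h := descent_lemma f hdiff L hL hlip (x t + β t • m t) (x (t+1))
    have e : x (t+1) - (x t + β t • m t) = -(α • gradient f (x t + β t • m t)) := by
      rw [hx t]; module
    rw [e, inner_neg_right, real_inner_smul_right, real_inner_self_eq_norm_sq] at h
    rw [hα] at h
    have e2 : ‖-((1/L) • gradient f (x t + β t • m t))‖^2
        = (1/L)^2 * ‖gradient f (x t + β t • m t)‖^2 := by
      rw [norm_neg, norm_smul, Real.norm_eq_abs, abs_of_pos (by positivity : (0:ℝ) < 1/L),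
        mul_pow]
    rw [e2] at h
    have e3 : L/2 * ((1/L)^2 * ‖gradient f (x t + β t • m t)‖^2)
        = 1/(2*L) * ‖gradient f (x t + β t • m t)‖^2 := by
      field_simp
    have e4 : (1:ℝ)/L * ‖gradient f (x t + β t • m t)‖^2
        - 1/(2*L) * ‖gradient f (x t + β t • m t)‖^2
        = 1/(2*L) * ‖gradient f (x t + β t • m t)‖^2 := by
      field_simp
      ring
    linarith
  have h2 : f (x t + β t • m t) ≤ f (x t)
      + β t * inner ℝ (gradient f (x t + β t • m t)) (m t) := by
    have h := convex_grad_ineq f hdiff hconv (x t + β t • m t) (x t)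
    have e : x t - (x t + β t • m t) = -(β t • m t) := by module
    rw [e, inner_neg_right, real_inner_smul_right] at h
    linarith
  have h3 : f (x t + β t • m t) ≤ f xstar
      + inner ℝ (gradient f (x t + β t • m t)) ((x t + β t • m t) - xstar) := by
    have h := convex_grad_ineq f hdiff hconv (x t + β t • m t) xstar
    have e : xstar - (x t + β t • m t) = -((x t + β t • m t) - xstar) := by module
    rw [e, inner_neg_right] at h
    linarith
  have h4 : f xstar ≤ f (x t) := hmin _
  have hlam0 : 0 ≤ a (t+1) - q t := by nlinarith [haq2 t, hq1 t]
  have hlamB : (a (t+1) - q t) * β t = q t * (c t - β t) := by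
    linear_combination haeq t
  have hG : (0:ℝ) ≤ ‖gradient f (x t + β t • m t)‖^2 := sq_nonneg _
  rw [hzid, hnorm, hsplit, hα]
  have e1 : a (t+1)/L * (f (x (t+1)) - f xstar)
      ≤ a (t+1)/L * (f (x t + β t • m t) - f xstar)
        - a (t+1)*(1/L)*(1/L)*(1/2)*‖gradient f (x t + β t • m t)‖^2 := by
    have h := mul_le_mul_of_nonneg_left (sub_le_sub_right h1 (f xstar))
      (div_nonneg (hapos t).le hL.le)
    have er : a (t+1)/L * ((f (x t + β t • m t)
        - 1/(2*L) * ‖gradient f (x t + β t • m t)‖^2) - f xstar)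
        = a (t+1)/L * (f (x t + β t • m t) - f xstar)
          - a (t+1)*(1/L)*(1/L)*(1/2)*‖gradient f (x t + β t • m t)‖^2 := by
      field_simp
      ring
    linarith [h, er]
  have e2 : (a (t+1) - q t)/L * (f (x t + β t • m t))
      ≤ (a (t+1) - q t)/L * (f (x t))
        + q t*(c t - β t)*(1/L)*inner ℝ (gradient f (x t + β t • m t)) (m t) := by
    have h := mul_le_mul_of_nonneg_left h2 (div_nonneg hlam0 hL.le)
    have er : (a (t+1) - q t)/L * (f (x t)
        + β t * inner ℝ (gradient f (x t + β t • m t)) (m t))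
        = (a (t+1) - q t)/L * (f (x t))
          + q t*(c t - β t)*(1/L)*inner ℝ (gradient f (x t + β t • m t)) (m t) := by
      linear_combination (inner ℝ (gradient f (x t + β t • m t)) (m t) / L) * hlamB
    linarith [h, er]
  have e3 : q t/L * (f (x t + β t • m t))
      ≤ q t/L * (f xstar)
        + q t*(1/L)*inner ℝ (gradient f (x t + β t • m t)) ((x t + β t • m t) - xstar) := by
    have h := mul_le_mul_of_nonneg_left h3 (div_nonneg (hqpos t).le hL.le)
    have er : q t/L * (f xstar
        + inner ℝ (gradient f (x t + β t • m t)) ((x t + β t • m t) - xstar))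
        = q t/L * (f xstar)
          + q t*(1/L)*inner ℝ (gradient f (x t + β t • m t)) ((x t + β t • m t) - xstar) := by
      ring
    linarith [h, er]
  have e4 : (a t - (a (t+1) - q t))/L * (f xstar)
      ≤ (a t - (a (t+1) - q t))/L * (f (x t)) :=
    mul_le_mul_of_nonneg_left h4 (div_nonneg (by linarith [hD t]) hL.le)
  have e5 : (0:ℝ) ≤ (a (t+1) - q t^2)*(1/L)*(1/L)*(1/2)
      * ‖gradient f (x t + β t • m t)‖^2 := by
    have h := sub_nonneg.2 (haq2 t)
    have hL' : (0:ℝ) ≤ 1/L := by positivity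
    positivity
  ring_nf at e1 e2 e3 e4 e5 ⊢
  linarith [e1, e2, e3, e4, e5]
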